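/- arXiv:2305.19955 — 4 statements merged into one kernel-verified Lean document; each statement's English description precedes it below -/
import Mathlib

section
/- Let N be a finite group, α an automorphism of N, and n a positive integer. Then the following are equivalent: (1) there exists a finite group H containing N as a normal subgroup with H/N cyclic of order n generated by xN for some x ∈ H such that conjugation by x on N equals α; (2) there exists an element x ∈ N with α(x) = x and such that αⁿ equals conjugation by x on N. -/
namespace ExtCrit

variable {N : Type} [Group N] (α : MulAut N) (n : ℕ) (x : N)

abbrev φ' : Multiplicative ℤ →* MulAut N := zpowersHom (MulAut N) α

abbrev G' := SemidirectProduct N (Multiplicative ℤ) (φ' α)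

def z : G' α := ⟨x⁻¹, Multiplicative.ofAdd (n : ℤ)⟩

variable {α x}

lemma fix_zpow (hx : α x = x) (k m : ℤ) : (α ^ k) (x ^ m) = x ^ m := by
  rw [map_zpow]
  congr 1
  have hx' : (α⁻¹ : MulAut N) x = x := by
    rw [MulAut.inv_def]
    exact (MulEquiv.symm_apply_eq α).mpr hx.symm
  induction k using Int.induction_on with
  | zero => simp
  | succ i ih => rw [add_comm, zpow_add, zpow_one, MulAut.mul_apply, ih, hx]
  | pred i ih =>
      rw [show (-(i:ℤ) - 1) = -(i:ℤ) + (-1) by ring, zpow_add, zpow_neg_one,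
        MulAut.mul_apply, hx', ih]

lemma phi_fix (hx : α x = x) (t : Multiplicative ℤ) (m : ℤ) :
    (φ' α t) (x ^ m) = x ^ m := by
  rw [zpowersHom_apply]; exact fix_zpow hx _ m

lemma phi_fix_inv (hx : α x = x) (t : Multiplicative ℤ) (m : ℤ) :
    (φ' α t) ((x ^ m)⁻¹) = (x ^ m)⁻¹ := by
  rw [map_inv, phi_fix hx]

lemma z_zpow (hx : α x = x) (m : ℤ) :
    (z α n x) ^ m = ⟨(x ^ m)⁻¹, Multiplicative.ofAdd (m * n)⟩ := by
  have hc : Commute (SemidirectProduct.inl (φ := φ' α) x⁻¹)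
      (SemidirectProduct.inr (Multiplicative.ofAdd (n : ℤ))) := by
    unfold Commute SemiconjBy
    ext
    · simp only [SemidirectProduct.mul_left, SemidirectProduct.mul_right,
        SemidirectProduct.left_inl, SemidirectProduct.right_inl,
        SemidirectProduct.left_inr, SemidirectProduct.right_inr, map_one,
        MulAut.one_apply, mul_one, one_mul]
      rw [show (x⁻¹ : N) = (x ^ (1:ℤ))⁻¹ by simp]
      rw [phi_fix_inv hx]
    · simp only [SemidirectProduct.mul_right, SemidirectProduct.right_inl,
        SemidirectProduct.right_inr, mul_one, one_mul]
  have hz : z α n x = SemidirectProduct.inl x⁻¹ *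
      SemidirectProduct.inr (Multiplicative.ofAdd (n : ℤ)) := by
    rw [← SemidirectProduct.mk_eq_inl_mul_inr]; rfl
  rw [hz, hc.mul_zpow, ← map_zpow, ← map_zpow, ← SemidirectProduct.mk_eq_inl_mul_inr]
  rw [inv_zpow, ← ofAdd_zsmul, smul_eq_mul]

lemma mul_z_zpow (hx : α x = x) (a : G' α) (m : ℤ) :
    a * (z α n x) ^ m =
      ⟨a.left * (x ^ m)⁻¹, Multiplicative.ofAdd (a.right.toAdd + m * n)⟩ := by
  rw [z_zpow n hx, SemidirectProduct.mul_def]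
  rw [phi_fix_inv hx, ofAdd_add, ofAdd_toAdd]

@[simp] lemma z_left : (z α n x).left = x⁻¹ := rfl
@[simp] lemma z_right : (z α n x).right = Multiplicative.ofAdd (n:ℤ) := rfl

lemma z_mul (hxn : ∀ g : N, (α ^ n) g = x * g * x⁻¹) (g : G' α) :
    z α n x * g = ⟨g.left * x⁻¹, Multiplicative.ofAdd ((n:ℤ) + g.right.toAdd)⟩ := by
  rw [SemidirectProduct.mul_def]
  refine SemidirectProduct.ext ?_ ?_
  · show x⁻¹ * (φ' α (Multiplicative.ofAdd (n:ℤ))) g.left = g.left * x⁻¹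
    rw [zpowersHom_apply, toAdd_ofAdd, zpow_natCast, hxn]
    group
  · show Multiplicative.ofAdd (n:ℤ) * g.right = Multiplicative.ofAdd ((n:ℤ) + g.right.toAdd)
    rw [ofAdd_add, ofAdd_toAdd]

lemma z_central (hx : α x = x) (hxn : ∀ g : N, (α ^ n) g = x * g * x⁻¹)
    (g : G' α) : Commute g (z α n x) := by
  unfold Commute SemiconjBy
  rw [← zpow_one (z α n x), mul_z_zpow n hx, zpow_one (z α n x), z_mul n hxn, zpow_one,
    one_mul, add_comm]

lemma conj_inl (w : G' α) (g : N) :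
    w * SemidirectProduct.inl g * w⁻¹ =
      SemidirectProduct.inl (w.left * (φ' α w.right) g * w.left⁻¹) := by
  refine SemidirectProduct.ext ?_ ?_
  · show (w.left * (φ' α w.right) ((SemidirectProduct.inl (φ := φ' α) g).left)) *
      (φ' α (w.right * (SemidirectProduct.inl (φ := φ' α) g).right)) (w⁻¹).left = _
    rw [SemidirectProduct.left_inl, SemidirectProduct.right_inl, mul_one,
      SemidirectProduct.inv_left]
    simp only [map_inv, MulAut.apply_inv_self, SemidirectProduct.left_inl]
  · show w.right * (SemidirectProduct.inl (φ := φ' α) g).right * (w⁻¹).right = _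
    rw [SemidirectProduct.right_inl, mul_one, SemidirectProduct.inv_right,
      SemidirectProduct.right_inl]
    exact mul_inv_cancel _

theorem backward {N : Type} [Group N] [Finite N] (α : MulAut N) (n : ℕ) (hn : 0 < n)
    (x : N) (hx : α x = x) (hxn : ∀ g : N, (α ^ n) g = x * g * x⁻¹) :
    ∃ (H : Type) (_ : Group H) (_ : Finite H) (ι : N →* H) (xx : H),
      Function.Injective ι ∧ ι.range.Normal ∧
      (∀ g : N, xx * ι g * xx⁻¹ = ι (α g)) ∧
      (∀ h : H, ∃ (g : N) (k : ℕ), h = ι g * xx ^ k) ∧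
      (∀ k : ℕ, xx ^ k ∈ ι.range ↔ n ∣ k) := by
  have hn' : (n : ℤ) ≠ 0 := by exact_mod_cast hn.ne'
  set Z : Subgroup (G' α) := Subgroup.zpowers (z α n x) with hZdef
  haveI hZn : Z.Normal := by
    constructor
    intro h hh g
    obtain ⟨m, rfl⟩ := Subgroup.mem_zpowers_iff.mp hh
    have heq : g * z α n x ^ m * g⁻¹ = z α n x ^ m := by
      rw [((z_central n hx hxn g).zpow_right m).eq, mul_assoc, mul_inv_cancel, mul_one]
    rw [heq]
    exact Subgroup.zpow_mem_zpowers _ m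
  let H := G' α ⧸ Z
  let ι : N →* H := (QuotientGroup.mk' Z).comp SemidirectProduct.inl
  let xx : H := QuotientGroup.mk' Z (SemidirectProduct.inr (Multiplicative.ofAdd (1 : ℤ)))
  have hxxz : ∀ m : ℤ, xx ^ m =
      QuotientGroup.mk' Z (SemidirectProduct.inr (Multiplicative.ofAdd m)) := by
    intro m
    show QuotientGroup.mk' Z (SemidirectProduct.inr (Multiplicative.ofAdd (1:ℤ))) ^ m = _
    rw [← map_zpow, ← map_zpow]
    congr 1
    rw [← ofAdd_zsmul, smul_eq_mul, mul_one]
  -- finiteness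
  haveI hfin : Finite H := by
    let f : G' α → N × ZMod n := fun w =>
      (w.left * x ^ (w.right.toAdd / (n : ℤ)), (w.right.toAdd : ZMod n))
    have hf : ∀ (a : G' α) (m : ℤ), f (a * z α n x ^ m) = f a := by
      intro a m
      rw [mul_z_zpow n hx]
      have h2 : (a.right.toAdd + m * n) / (n : ℤ) = a.right.toAdd / (n : ℤ) + m :=
        Int.add_mul_ediv_right _ _ hn'
      refine Prod.ext ?_ ?_
      · show a.left * (x ^ m)⁻¹ *
          x ^ ((Multiplicative.ofAdd (a.right.toAdd + m * n)).toAdd / (n:ℤ)) = _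
        rw [toAdd_ofAdd, h2, zpow_add]
        group
        rfl
      · show (((Multiplicative.ofAdd (a.right.toAdd + m * n)).toAdd : ℤ) : ZMod n) = _
        rw [toAdd_ofAdd]
        push_cast
        simp
        rfl
    haveI : NeZero n := ⟨hn.ne'⟩
    have hconst : ∀ (a b : G' α), @Setoid.r _ (QuotientGroup.leftRel Z) a b → f a = f b := by
      intro a b hab
      rw [QuotientGroup.leftRel_apply] at hab
      obtain ⟨m, hm⟩ := Subgroup.mem_zpowers_iff.mp hab
      have : b = a * z α n x ^ m := by rw [hm]; group
      rw [this, hf]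
    refine Finite.of_injective (fun h : H => Quotient.liftOn' h f hconst) ?_
    intro h1 h2
    induction h1 using Quotient.inductionOn' with | h a =>
    induction h2 using Quotient.inductionOn' with | h b =>
    intro hab
    have hfe : f a = f b := hab
    have h2nd : ((a.right.toAdd : ℤ) : ZMod n) = ((b.right.toAdd : ℤ) : ZMod n) :=
      congrArg Prod.snd hfe
    have hdvd : (n : ℤ) ∣ b.right.toAdd - a.right.toAdd :=
      ((ZMod.intCast_eq_intCast_iff _ _ _).mp h2nd).dvd
    obtain ⟨m, hm⟩ := hdvd
    have hb : b.right.toAdd = a.right.toAdd + m * n := by linarith [hm]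
    have hdiv : b.right.toAdd / (n:ℤ) = a.right.toAdd / (n:ℤ) + m := by
      rw [hb]; exact Int.add_mul_ediv_right _ _ hn'
    have h1st : a.left * x ^ (a.right.toAdd / (n:ℤ)) =
        b.left * x ^ (b.right.toAdd / (n:ℤ)) := congrArg Prod.fst hfe
    apply Quotient.sound'
    rw [QuotientGroup.leftRel_apply]
    refine Subgroup.mem_zpowers_iff.mpr ⟨m, ?_⟩
    have hbeq : b = a * z α n x ^ m := by
      rw [mul_z_zpow n hx]
      refine SemidirectProduct.ext ?_ ?_
      · show b.left = a.left * (x ^ m)⁻¹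
        have : b.left = a.left * x ^ (a.right.toAdd / (n:ℤ)) *
            (x ^ (b.right.toAdd / (n:ℤ)))⁻¹ := by
          rw [h1st]; group
        rw [this, hdiv, zpow_add]
        group
      · show b.right = Multiplicative.ofAdd (a.right.toAdd + m * n)
        rw [← hb, ofAdd_toAdd]
    rw [hbeq]
    group
  -- injectivity of ι
  have hι : Function.Injective ι := by
    rw [injective_iff_map_eq_one]
    intro g hg
    have hmem : SemidirectProduct.inl (φ := φ' α) g ∈ Z :=
      (QuotientGroup.eq_one_iff _).mp hg
    obtain ⟨m, hm⟩ := Subgroup.mem_zpowers_iff.mp hmem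
    rw [z_zpow n hx] at hm
    have hr : Multiplicative.ofAdd (m * (n:ℤ)) = (1 : Multiplicative ℤ) :=
      congrArg SemidirectProduct.right hm
    have hm0 : m = 0 := by
      have hmn := congrArg Multiplicative.toAdd hr
      simp at hmn
      omega
    rw [hm0] at hm
    have hl := congrArg SemidirectProduct.left hm
    simpa using hl.symm
  -- normality of range
  have hnorm : ι.range.Normal := by
    constructor
    intro q hq h
    obtain ⟨g, rfl⟩ := hq
    obtain ⟨w, rfl⟩ := QuotientGroup.mk'_surjective Z h
    refine ⟨w.left * (φ' α w.right) g * w.left⁻¹, ?_⟩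
    show QuotientGroup.mk' Z (SemidirectProduct.inl _) = _
    rw [← conj_inl, map_mul, map_mul, map_inv]
    rfl
  -- conjugation
  have hconj : ∀ g : N, xx * ι g * xx⁻¹ = ι (α g) := by
    intro g
    show QuotientGroup.mk' Z _ * QuotientGroup.mk' Z _ *
      (QuotientGroup.mk' Z _)⁻¹ = QuotientGroup.mk' Z _
    rw [← map_inv, ← map_mul, ← map_mul, conj_inl]
    congr 2
    simp only [SemidirectProduct.left_inr, SemidirectProduct.right_inr, one_mul,
      inv_one, mul_one, zpowersHom_apply, toAdd_ofAdd, zpow_one]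
  -- decomposition
  have hdecomp : ∀ h : H, ∃ (g : N) (k : ℕ), h = ι g * xx ^ k := by
    intro h
    obtain ⟨w, rfl⟩ := QuotientGroup.mk'_surjective Z h
    have hw : QuotientGroup.mk' Z w = ι w.left * xx ^ (w.right.toAdd) := by
      rw [hxxz]
      show _ = (QuotientGroup.mk' Z) (SemidirectProduct.inl w.left) * _
      rw [← map_mul]
      congr 1
      rw [ofAdd_toAdd]
      exact (SemidirectProduct.inl_left_mul_inr_right w).symm
    refine ⟨w.left, (w.right.toAdd % (orderOf xx : ℤ)).toNat, ?_⟩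
    rw [hw]
    congr 1
    rw [← zpow_natCast xx, Int.toNat_of_nonneg
      (Int.emod_nonneg _ (by exact_mod_cast (orderOf_pos xx).ne')), zpow_mod_orderOf]
  -- powers in range
  have hrange : ∀ k : ℕ, xx ^ k ∈ ι.range ↔ n ∣ k := by
    intro k
    have hxk : xx ^ k = QuotientGroup.mk' Z (SemidirectProduct.inr
        (Multiplicative.ofAdd (k : ℤ))) := by
      rw [← zpow_natCast xx, hxxz]
    constructor
    · rintro ⟨g, hg⟩
      rw [hxk] at hg
      obtain ⟨zz, hzz, hmul⟩ := (QuotientGroup.mk'_eq_mk' Z).mp hg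
      obtain ⟨m, rfl⟩ := Subgroup.mem_zpowers_iff.mp hzz
      rw [mul_z_zpow n hx] at hmul
      have hr := congrArg SemidirectProduct.right hmul
      simp only [SemidirectProduct.right_inl, SemidirectProduct.right_inr] at hr
      have : (1:Multiplicative ℤ).toAdd + m * (n:ℤ) = (k : ℤ) :=
        congrArg Multiplicative.toAdd hr
      rw [toAdd_one, zero_add] at this
      have : (n:ℤ) ∣ (k:ℤ) := ⟨m, by linarith [this]⟩
      exact_mod_cast this
    · rintro ⟨c, rfl⟩
      refine ⟨x ^ c, ?_⟩
      rw [hxk]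
      refine (QuotientGroup.mk'_eq_mk' Z).mpr ⟨z α n x ^ (c:ℤ), Subgroup.zpow_mem_zpowers _ _, ?_⟩
      rw [mul_z_zpow n hx]
      refine SemidirectProduct.ext ?_ ?_
      · show (SemidirectProduct.inl (φ := φ' α) (x ^ c)).left * (x ^ (c:ℤ))⁻¹ = 1
        rw [SemidirectProduct.left_inl, zpow_natCast]
        group
      · show Multiplicative.ofAdd
            ((SemidirectProduct.inl (φ := φ' α) (x^c)).right.toAdd + (c:ℤ) * n) = _
        rw [SemidirectProduct.right_inl, toAdd_one, zero_add,
          SemidirectProduct.right_inr]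
        congr 1
        push_cast
        ring
  exact ⟨H, inferInstance, hfin, ι, xx, hι, hnorm, hconj, hdecomp, hrange⟩

end ExtCrit

/-- Let `N` be a finite group, `α` an automorphism of `N` and `n ≥ 1`.
Then the following are equivalent:
(1) there is a finite group `H` containing `N` as a normal subgroup (via an embedding `ι`)
with `H/N` cyclic of order `n`, generated by `xN` for some `x ∈ H` whose conjugation
action on `N` is `α`;
(2) there is `x ∈ N` with `α(x) = x` and `αⁿ` equal to conjugation by `x`. -/
theorem extension_criterion (N : Type) [Group N] [Finite N] (α : MulAut N) (n : ℕ)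
    (hn : 0 < n) :
    (∃ (H : Type) (_ : Group H) (_ : Finite H) (ι : N →* H) (x : H),
      Function.Injective ι ∧ ι.range.Normal ∧
      (∀ g : N, x * ι g * x⁻¹ = ι (α g)) ∧
      (∀ h : H, ∃ (g : N) (k : ℕ), h = ι g * x ^ k) ∧
      (∀ k : ℕ, x ^ k ∈ ι.range ↔ n ∣ k)) ↔
    (∃ x : N, α x = x ∧ ∀ g : N, (α ^ n) g = x * g * x⁻¹) := by
  constructor
  · rintro ⟨H, _, _, ι, x, hinj, -, hconj, -, hpow⟩
    obtain ⟨x0, hx0⟩ := (hpow n).mpr dvd_rfl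
    have key : ∀ (k : ℕ) (g : N), x ^ k * ι g * (x ^ k)⁻¹ = ι ((α ^ k) g) := by
      intro k
      induction k with
      | zero => intro g; simp
      | succ k ih =>
          intro g
          have hstep : x ^ (k+1) * ι g * (x ^ (k+1))⁻¹
              = x * (x ^ k * ι g * (x ^ k)⁻¹) * x⁻¹ := by
            rw [pow_succ']
            group
          rw [hstep, ih, hconj]
          congr 1
          rw [pow_succ']
          rfl
    refine ⟨x0, ?_, ?_⟩
    · apply hinj
      rw [← hconj x0, hx0]
      group
    · intro g
      apply hinj
      rw [← key n g, map_mul, map_mul, map_inv, ← hx0]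
  · rintro ⟨x, hx, hxn⟩
    exact ExtCrit.backward α n hn x hx hxn
end

section
/- Let K be a finite group and q a positive integer. Define W = {(x₁,…,x_q) ∈ Z(K)^q : x₁⋯x_q = 1} ≤ Z(K^q) and U = K^q / W. Then Z(U) = Z(K)^q / W, which is isomorphic to Z(K), and U/Z(U) is isomorphic to (K/Z(K))^q. -/
open scoped BigOperators
open scoped IsMulCommutative

variable (K : Type) [Group K] (q : ℕ)

/-- The product map `Z(K)^q → Z(K)`, a homomorphism since the center is commutative. -/
noncomputable def centerProdHom : (Fin q → Subgroup.center K) →* Subgroup.center K where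
  toFun x := ∏ i, x i
  map_one' := by simp
  map_mul' x y := by simp [Finset.prod_mul_distrib]

/-- The canonical embedding `Z(K)^q → K^q`. -/
noncomputable def centerPiEmbed : (Fin q → Subgroup.center K) →* (Fin q → K) :=
  Pi.monoidHom fun i => (Subgroup.center K).subtype.comp
    (Pi.evalMonoidHom (fun _ => Subgroup.center K) i)

/-- `W = {(x₁,…,x_q) ∈ Z(K)^q : x₁⋯x_q = 1}`, as a subgroup of `K^q`. -/
noncomputable def Wsub : Subgroup (Fin q → K) :=
  (centerProdHom K q).ker.map (centerPiEmbed K q)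

instance : (Wsub K q).Normal := by
  constructor
  rintro w hw g
  obtain ⟨y, hy, rfl⟩ := hw
  have h : g * centerPiEmbed K q y * g⁻¹ = centerPiEmbed K q y := by
    funext i
    show g i * (y i : K) * (g i)⁻¹ = (y i : K)
    rw [Subgroup.mem_center_iff.mp (y i).2 (g i), mul_inv_cancel_right]
  rw [h]
  exact ⟨y, hy, rfl⟩


lemma centerPiEmbed_apply (y : Fin q → Subgroup.center K) (i : Fin q) :
    centerPiEmbed K q y i = (y i : K) := rfl

lemma centerPiEmbed_injective : Function.Injective (centerPiEmbed K q) := by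
  intro a b hab
  funext i
  exact Subtype.ext (congrFun hab i)

abbrev Psub : Subgroup (Fin q → K) :=
  Subgroup.pi Set.univ fun _ => Subgroup.center K

lemma mem_Psub (x : Fin q → K) : x ∈ Psub K q ↔ ∀ i, x i ∈ Subgroup.center K := by
  simp [Subgroup.mem_pi]

lemma Wsub_le_Psub : Wsub K q ≤ Psub K q := by
  rintro x ⟨y, -, rfl⟩
  exact (mem_Psub K q _).mpr fun i => (y i).2

lemma center_eq :
    Subgroup.center ((Fin q → K) ⧸ Wsub K q) =
      (Psub K q).map (QuotientGroup.mk' (Wsub K q)) := by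
  ext u
  constructor
  · intro hu
    obtain ⟨g, rfl⟩ := QuotientGroup.mk'_surjective (Wsub K q) u
    refine ⟨g, (mem_Psub K q g).mpr fun i => ?_, rfl⟩
    refine Subgroup.mem_center_iff.mpr fun k => ?_
    set h : Fin q → K := Function.update (1 : Fin q → K) i k with hh
    have hcomm := Subgroup.mem_center_iff.mp hu (QuotientGroup.mk' (Wsub K q) h)
    have hmem : (h * g)⁻¹ * (g * h) ∈ Wsub K q := by
      rw [← QuotientGroup.eq]
      simpa only [QuotientGroup.mk'_apply, QuotientGroup.mk_mul] using hcomm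
    obtain ⟨y, hyker, hyx⟩ := hmem
    have hyj : ∀ j, j ≠ i → y j = 1 := by
      intro j hj
      have := congrFun hyx j
      rw [centerPiEmbed_apply] at this
      refine Subtype.ext ?_
      rw [this]
      simp [hh, Function.update_of_ne hj]
    have hyi : (y i : K) = (k * g i)⁻¹ * (g i * k) := by
      have := congrFun hyx i
      rw [centerPiEmbed_apply] at this
      rw [this]
      simp [hh]
    have hyi1 : y i = 1 := by
      have hprod : ∏ j, y j = 1 := hyker
      calc y i = ∏ j, y j :=
            (Finset.prod_eq_single i (fun j _ hj => hyj j hj)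
              (fun hi => absurd (Finset.mem_univ i) hi)).symm
        _ = 1 := hprod
    have h3 : (k * g i)⁻¹ * (g i * k) = 1 := by
      rw [← hyi]
      exact congrArg _ hyi1
    exact inv_mul_eq_one.mp h3
  · rintro ⟨g, hg, rfl⟩
    refine Subgroup.mem_center_iff.mpr fun v => ?_
    obtain ⟨h, rfl⟩ := QuotientGroup.mk'_surjective (Wsub K q) v
    have hcomm : h * g = g * h := by
      funext i
      show h i * g i = g i * h i
      exact Subgroup.mem_center_iff.mp ((mem_Psub K q g).mp hg i) (h i)
    rw [← map_mul, ← map_mul, hcomm]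

lemma center_eq_range :
    Subgroup.center ((Fin q → K) ⧸ Wsub K q) =
      MonoidHom.range ((QuotientGroup.mk' (Wsub K q)).comp (centerPiEmbed K q)) := by
  rw [center_eq]
  ext u
  constructor
  · rintro ⟨g, hg, rfl⟩
    exact ⟨fun i => ⟨g i, (mem_Psub K q g).mp hg i⟩, rfl⟩
  · rintro ⟨y, rfl⟩
    exact ⟨centerPiEmbed K q y, (mem_Psub K q _).mpr fun i => (y i).2, rfl⟩

lemma ker_comp_eq :
    MonoidHom.ker ((QuotientGroup.mk' (Wsub K q)).comp (centerPiEmbed K q)) =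
      MonoidHom.ker (centerProdHom K q) := by
  ext y
  simp only [MonoidHom.mem_ker, MonoidHom.comp_apply, QuotientGroup.mk'_apply]
  rw [QuotientGroup.eq_one_iff]
  constructor
  · rintro ⟨z, hz, hzy⟩
    rw [centerPiEmbed_injective K q hzy] at hz
    exact hz
  · intro h
    exact ⟨y, h, rfl⟩

lemma centerProdHom_surjective (hq : 0 < q) :
    Function.Surjective (centerProdHom K q) := by
  intro z
  refine ⟨Function.update (1 : Fin q → Subgroup.center K) ⟨0, hq⟩ z, ?_⟩
  show ∏ i, Function.update (1 : Fin q → Subgroup.center K) ⟨0, hq⟩ z i = z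
  rw [Finset.prod_eq_single ⟨0, hq⟩
    (fun j _ hj => by rw [Function.update_of_ne hj]; rfl)
    (fun hi => absurd (Finset.mem_univ _) hi), Function.update_self]

/-- With `W = {(x₁,…,x_q) ∈ Z(K)^q : x₁⋯x_q = 1}` and `U = K^q/W`, the center of
`U` equals `Z(K)^q/W` (the image of `Z(K)^q` in the quotient), which is isomorphic to `Z(K)`,
and `U/Z(U)` is isomorphic to `(K/Z(K))^q`. -/
theorem center_of_quotient_by_W [Finite K] (hq : 0 < q) :
    Subgroup.center ((Fin q → K) ⧸ Wsub K q) =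
      (Subgroup.pi Set.univ fun _ => Subgroup.center K).map
        (QuotientGroup.mk' (Wsub K q)) ∧
    Nonempty (Subgroup.center ((Fin q → K) ⧸ Wsub K q) ≃* Subgroup.center K) ∧
    Nonempty ((((Fin q → K) ⧸ Wsub K q) ⧸ Subgroup.center ((Fin q → K) ⧸ Wsub K q)) ≃*
      (Fin q → K ⧸ Subgroup.center K)) := by
  refine ⟨center_eq K q, ⟨?_⟩, ⟨?_⟩⟩
  · exact
      ((MulEquiv.subgroupCongr (center_eq_range K q)).trans
        (QuotientGroup.quotientKerEquivRange _).symm).trans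
        ((QuotientGroup.quotientMulEquivOfEq (ker_comp_eq K q)).trans
          (QuotientGroup.quotientKerEquivOfSurjective _ (centerProdHom_surjective K q hq)))
  · set g : (Fin q → K) →* (Fin q → K ⧸ Subgroup.center K) :=
      Pi.monoidHom (fun i => (QuotientGroup.mk' (Subgroup.center K)).comp
        (Pi.evalMonoidHom (fun _ => K) i)) with hgdef
    have hker : g.ker = Psub K q := by
      ext x
      simp only [MonoidHom.mem_ker, mem_Psub]
      constructor
      · intro h i
        have h2 := congrFun h i
        rw [show g x i = QuotientGroup.mk (x i) from rfl,
          show (1 : Fin q → K ⧸ Subgroup.center K) i = 1 from rfl,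
          QuotientGroup.eq_one_iff] at h2
        exact h2
      · intro h
        funext i
        show QuotientGroup.mk (x i) = 1
        exact (QuotientGroup.eq_one_iff _).mpr (h i)
    have hWle : Wsub K q ≤ g.ker := hker ▸ Wsub_le_Psub K q
    set L := QuotientGroup.lift (Wsub K q) g hWle with hLdef
    have hLsurj : Function.Surjective L := by
      intro y
      refine ⟨QuotientGroup.mk (fun i => (y i).out), ?_⟩
      show g _ = y
      funext i
      show QuotientGroup.mk ((y i).out) = y i
      exact QuotientGroup.out_eq' (y i)
    have hLker : L.ker = Subgroup.center ((Fin q → K) ⧸ Wsub K q) := by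
      rw [center_eq K q]
      ext u
      obtain ⟨x, rfl⟩ := QuotientGroup.mk'_surjective (Wsub K q) u
      constructor
      · intro h
        refine ⟨x, ?_, rfl⟩
        have hx : x ∈ g.ker := h
        rwa [hker] at hx
      · rintro ⟨p, hp, hpx⟩
        have hw : p⁻¹ * x ∈ Wsub K q := by
          rw [← QuotientGroup.eq]
          exact hpx
        have hx : x ∈ Psub K q := by
          have := mul_mem hp (Wsub_le_Psub K q hw)
          rwa [mul_inv_cancel_left] at this
        show g x = 1
        exact hker.symm.le hx
    exact (QuotientGroup.quotientMulEquivOfEq hLker.symm).trans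
      (QuotientGroup.quotientKerEquivOfSurjective L hLsurj)
end

section
/- Let K be a finite group with a faithful irreducible character μ, let Q = ⟨x⟩ be cyclic of prime order q with gcd(q, |Z(K)|) = 1, and let ρ be a faithful irreducible character of Q. Then the external product μ × ρ is a faithful irreducible character of K × Q. -/
open Polynomial CategoryTheory

section MatrixLemma

variable {n : Type} [Fintype n] [DecidableEq n]

/-- A matrix of finite multiplicative order whose trace equals the dimension is the identity. -/
lemma matrix_eq_one_of_pow_eq_one_of_trace {M : Matrix n n ℂ} {N : ℕ}
    (hN : N ≠ 0) (hM : M ^ N = 1) (htr : M.trace = (Fintype.card n : ℂ)) : M = 1 := by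
  cases isEmpty_or_nonempty n with
  | inl h => exact Subsingleton.elim M 1
  | inr h =>
  set d := Fintype.card n with hd
  have hd0 : d ≠ 0 := Fintype.card_ne_zero
  have hsplits : M.charpoly.Splits := IsAlgClosed.splits M.charpoly
  have hcard : Multiset.card M.charpoly.roots = d := by
    rw [Polynomial.splits_iff_card_roots.mp hsplits, Matrix.charpoly_natDegree_eq_dim]
  -- each root is an N-th root of unity
  have hpow : ∀ x ∈ M.charpoly.roots, x ^ N = 1 := by
    intro x hx
    have hroot : M.charpoly.eval x = 0 := (Polynomial.isRoot_of_mem_roots hx)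
    have hdet : (Matrix.scalar n x - M).det = 0 := by
      have heval : M.charpoly.eval x = (Matrix.scalar n x - M).det := by
        rw [Matrix.charpoly, eval_det, Matrix.matPolyEquiv_charmatrix]
        simp
      rwa [heval] at hroot
    obtain ⟨v, hv0, hv⟩ := Matrix.exists_mulVec_eq_zero_iff.mpr hdet
    have hMv : M.mulVec v = x • v := by
      have h1 : (Matrix.scalar n x).mulVec v - M.mulVec v = 0 := by
        rw [← Matrix.sub_mulVec]; exact hv
      have h2 : (Matrix.scalar n x).mulVec v = x • v := by
        funext i
        simp [Matrix.scalar, Matrix.mulVec_diagonal]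
      rw [h2] at h1
      have := sub_eq_zero.mp h1
      exact this.symm
    have hMpow : ∀ j : ℕ, (M ^ j).mulVec v = x ^ j • v := by
      intro j
      induction j with
      | zero => simp [Matrix.one_mulVec]
      | succ j ih =>
        rw [pow_succ, ← Matrix.mulVec_mulVec, hMv, Matrix.mulVec_smul, ih, smul_smul,
          ← pow_succ']
    have hNv := hMpow N
    rw [hM, Matrix.one_mulVec] at hNv
    obtain ⟨i, hi⟩ := Function.ne_iff.mp hv0
    have hvi : v i = x ^ N * v i := by
      have := congrFun hNv i
      simpa using this
    have : x ^ N * v i = 1 * v i := by rw [one_mul, ← hvi]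
    exact mul_right_cancel₀ hi this
  -- each root equals 1
  have habs : ∀ x ∈ M.charpoly.roots, ‖x‖ = 1 := by
    intro x hx
    have h1 : ‖x‖ ^ N = 1 := by
      rw [← norm_pow, hpow x hx, norm_one]
    rcases lt_trichotomy (‖x‖) 1 with h | h | h
    · exfalso
      have h2 := pow_lt_one₀ (norm_nonneg x) h hN
      rw [h1] at h2
      exact lt_irrefl _ h2
    · exact h
    · exfalso
      have h2 := one_lt_pow₀ h hN
      rw [h1] at h2
      exact lt_irrefl _ h2
  have hsum : M.charpoly.roots.sum = (d : ℂ) := by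
    rw [← Matrix.trace_eq_sum_roots_charpoly, htr]
  have hone : ∀ x ∈ M.charpoly.roots, x = 1 := by
    by_contra hcon
    push_neg at hcon
    obtain ⟨x₀, hx₀mem, hx₀⟩ := hcon
    have hre_lt : x₀.re < 1 := by
      rcases lt_or_eq_of_le ((Complex.re_le_norm x₀).trans_eq (habs x₀ hx₀mem)) with h | h
      · exact h
      · exfalso
        apply hx₀
        have habs2 : ‖x₀‖ ^ 2 = 1 := by rw [habs x₀ hx₀mem]; norm_num
        rw [Complex.sq_norm, Complex.normSq_apply] at habs2
        have him : x₀.im = 0 := by nlinarith [sq_nonneg x₀.im]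
        exact Complex.ext (by rw [Complex.one_re]; exact h) (by rw [Complex.one_im]; exact him)
    have hlt : (M.charpoly.roots.map Complex.re).sum <
        (M.charpoly.roots.map (fun _ => (1:ℝ))).sum := by
      apply Multiset.sum_lt_sum
      · intro x hx
        exact (Complex.re_le_norm x).trans_eq (habs x hx)
      · exact ⟨x₀, hx₀mem, hre_lt⟩
    have hconst : (M.charpoly.roots.map (fun _ => (1:ℝ))).sum = (d : ℝ) := by
      rw [Multiset.map_const', Multiset.sum_replicate, hcard]
      simp
    have hre_gen : ∀ s : Multiset ℂ, (s.map Complex.re).sum = s.sum.re := by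
      intro s
      induction s using Multiset.induction with
      | empty => simp
      | cons a s ih => simp [ih]
    have hre_sum : (M.charpoly.roots.map Complex.re).sum = (d : ℝ) := by
      rw [hre_gen, hsum]
      simp
    rw [hre_sum, hconst] at hlt
    exact lt_irrefl _ hlt
  -- hence the charpoly is (X - 1) ^ d
  have hcp : M.charpoly = (X - C (1:ℂ)) ^ d := by
    have heq := hsplits.eq_prod_roots_of_monic M.charpoly_monic
    have hmap : M.charpoly.roots.map (fun a => X - C a) =
        Multiset.replicate d (X - C (1:ℂ)) := by
      rw [Multiset.eq_replicate]
      refine ⟨by rw [Multiset.card_map, hcard], ?_⟩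
      intro b hb
      obtain ⟨a, ha, rfl⟩ := Multiset.mem_map.mp hb
      rw [hone a ha]
    rw [heq, hmap, Multiset.prod_replicate]
  -- minpoly divides both (X-1)^d and the squarefree X^N - 1, so minpoly = X - 1
  have hint : IsIntegral ℂ M := IsIntegral.of_finite ℂ M
  haveI : Nontrivial (Matrix n n ℂ) := nontrivial_of_ne (1 : Matrix n n ℂ) 0 (fun hcon => one_ne_zero (α := ℂ) (by simpa using congrFun (congrFun hcon h.some) h.some))
  have hdvd1 : minpoly ℂ M ∣ (X - C (1:ℂ)) ^ d := by
    apply minpoly.dvd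
    rw [← hcp]
    exact Matrix.aeval_self_charpoly M
  have hdvd2 : minpoly ℂ M ∣ X ^ N - 1 := by
    apply minpoly.dvd
    simp [hM]
  obtain ⟨i, hile, hassoc⟩ := (dvd_prime_pow (Polynomial.prime_X_sub_C (1:ℂ)) d).mp hdvd1
  have hsf : Squarefree (X ^ N - 1 : ℂ[X]) := by
    apply Polynomial.Separable.squarefree
    rw [Polynomial.X_pow_sub_one_separable_iff]
    exact_mod_cast (Nat.cast_ne_zero (R := ℂ)).mpr hN
  have hmp : minpoly ℂ M = X - C (1:ℂ) := by
    rcases i with _ | i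
    · exfalso
      have hunit : IsUnit (minpoly ℂ M) := by
        rw [← associated_one_iff_isUnit]
        simpa using hassoc
      have hpos := minpoly.natDegree_pos hint
      rw [Polynomial.natDegree_eq_zero_of_isUnit hunit] at hpos
      exact lt_irrefl 0 hpos
    rcases i with _ | i
    · rw [pow_one] at hassoc
      exact Polynomial.eq_of_monic_of_associated (minpoly.monic hint) (monic_X_sub_C 1) hassoc
    · exfalso
      have hdvd3 : (X - C (1:ℂ)) * (X - C (1:ℂ)) ∣ X ^ N - 1 := by
        have h1 : (X - C (1:ℂ)) * (X - C (1:ℂ)) ∣ (X - C (1:ℂ)) ^ (i + 2) := by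
          rw [← pow_two]
          exact pow_dvd_pow _ (by omega)
        exact (h1.trans hassoc.symm.dvd).trans hdvd2
      exact Polynomial.not_isUnit_X_sub_C 1 (hsf _ hdvd3)
  have := minpoly.aeval ℂ M
  rw [hmp] at this
  simp only [map_sub, aeval_X, aeval_C] at this
  rw [sub_eq_zero] at this
  simpa using this

end MatrixLemma

/-- Endomorphism version. -/
lemma endo_eq_one_of_pow_eq_one_of_trace {V : Type} [AddCommGroup V] [Module ℂ V]
    [FiniteDimensional ℂ V] {f : V →ₗ[ℂ] V} {N : ℕ} (hN : N ≠ 0) (hf : f ^ N = 1)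
    (htr : LinearMap.trace ℂ V f = (Module.finrank ℂ V : ℂ)) : f = 1 := by
  classical
  let b := Module.finBasis ℂ V
  let e := LinearMap.toMatrixAlgEquiv b
  have hM : (e f) ^ N = 1 := by rw [← map_pow, hf, map_one]
  have htr' : (e f).trace = (Fintype.card (Fin (Module.finrank ℂ V)) : ℂ) := by
    have : (LinearMap.toMatrix b b f).trace = LinearMap.trace ℂ V f :=
      (LinearMap.trace_eq_matrix_trace ℂ b f).symm
    rw [show e f = LinearMap.toMatrix b b f from rfl, this, htr]
    simp
  have := matrix_eq_one_of_pow_eq_one_of_trace hN hM htr'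
  have : e f = e 1 := by rw [this, map_one]
  exact e.injective this

section SimpleTransfer

variable {G : Type} [Monoid G]

/-- Restriction of a representation to an invariant submodule. -/
noncomputable def subRep (Y : FDRep ℂ G) (p : Submodule ℂ Y)
    (hp : ∀ (s : G), ∀ v ∈ p, Y.ρ s v ∈ p) : Representation ℂ G p where
  toFun s := (Y.ρ s).restrict (fun v hv => hp s v hv)
  map_one' := by
    ext v
    simp [LinearMap.restrict_apply]
  map_mul' s t := by
    ext v
    simp [LinearMap.restrict_apply, Module.End.mul_apply]

lemma injective_hom_of_mono {Y W : FDRep ℂ G} (g : Y ⟶ W) [Mono g] :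
    Function.Injective g.hom := by
  let φ : (↥Y) →ₗ[ℂ] (↥W) := g.hom.hom.hom
  have hinv : ∀ (s : G), ∀ v ∈ LinearMap.ker φ, Y.ρ s v ∈ LinearMap.ker φ := by
    intro s v hv
    have hcv : φ (Y.ρ s v) = W.ρ s (φ v) := congrArg (fun h => h.hom.hom v) (g.comm s)
    simp only [LinearMap.mem_ker] at hv ⊢
    rw [hcv, hv, map_zero]
  set Z : FDRep ℂ G := FDRep.of (subRep Y (LinearMap.ker φ) hinv) with hZ
  let ι : Z ⟶ Y := ⟨FGModuleCat.ofHom (LinearMap.ker φ).subtype, fun s => rfl⟩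
  have h0 : ι ≫ g = 0 := by
    apply Action.hom_ext
    rw [Action.comp_hom, Action.zero_hom]
    apply FGModuleCat.hom_ext
    apply LinearMap.ext
    intro v
    exact v.2
  have hι : ι = 0 := Limits.zero_of_comp_mono g h0
  have hker : LinearMap.ker φ = ⊥ := by
    rw [Submodule.eq_bot_iff]
    intro v hv
    have : ι.hom ⟨v, hv⟩ = 0 := by rw [hι, Action.zero_hom]; rfl
    exact this
  exact LinearMap.ker_eq_bot.mp hker

lemma simple_of_res_simple {H : Type} [Monoid H] (f : G →* H) (W : FDRep ℂ H)
    (hs : Simple ((Action.res (FGModuleCat ℂ) f).obj W)) : Simple W := by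
  haveI := hs
  constructor
  intro Y g hmono
  constructor
  · intro hiso h0
    obtain ⟨gi, hgi1, hgi2⟩ := hiso.out
    have hid : 𝟙 W = 0 := by
      rw [← hgi2, h0]; simp
    have hid' : (𝟙 ((Action.res (FGModuleCat ℂ) f).obj W) : _ ⟶ _) = 0 := by
      apply Action.hom_ext
      rw [Action.id_hom, Action.zero_hom]
      have h2 := congrArg Action.Hom.hom hid
      rw [Action.id_hom, Action.zero_hom] at h2
      exact h2
    exact (id_nonzero _) hid'
  · intro hne
    set F := Action.res (FGModuleCat ℂ) f with hF
    have hinj : Function.Injective g.hom := injective_hom_of_mono g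
    have hmono' : Mono ((F.map g).hom) := ConcreteCategory.mono_of_injective _ hinj
    haveI hmonoF : Mono (F.map g) :=
      (Action.forget (FGModuleCat ℂ) _).mono_of_mono_map hmono'
    have hne' : F.map g ≠ 0 := by
      intro hz
      apply hne
      apply Action.hom_ext
      have h2 := congrArg Action.Hom.hom hz
      rw [Action.zero_hom] at h2
      exact h2
    haveI : IsIso (F.map g) := isIso_of_mono_of_nonzero hne'
    haveI : IsIso g.hom := by
      have h3 : IsIso ((Action.forget (FGModuleCat ℂ) _).map (F.map g)) := inferInstance
      exact h3
    exact Action.isIso_of_hom_isIso g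

end SimpleTransfer

/-- The external product of a representation of `K` with a linear character of `Q`. -/
noncomputable def extRep {K Q : Type} [Group K] [Group Q] (V : FDRep ℂ K) (ρ : Q →* ℂˣ) :
    Representation ℂ (K × Q) V where
  toFun p := ((ρ p.2 : ℂ) • V.ρ p.1 : ↥V →ₗ[ℂ] ↥V)
  map_one' := by simp
  map_mul' p p' := by
    simp only [Prod.fst_mul, Prod.snd_mul, map_mul, Units.val_mul]
    rw [smul_mul_smul_comm]

/-- `χ : G → ℂ` is an irreducible (complex) character of `G` if it is the character of some
simple finite-dimensional complex representation of `G`. -/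
def IsIrrChar (G : Type) [Group G] (χ : G → ℂ) : Prop :=
  ∃ V : FDRep ℂ G, CategoryTheory.Simple V ∧ χ = V.character

/-- Let `K` be a finite group with a faithful irreducible character `μ`, let
`Q` be cyclic of prime order `q` with `q ∤ |Z(K)|`, and let `ρ` be a faithful (injective)
linear character of `Q`.  Then the external product `μ × ρ`, i.e.
`(k, x) ↦ μ(k)·ρ(x)`, is a faithful irreducible character of `K × Q`. -/
theorem external_product_faithful_irreducible
    (K Q : Type) [Group K] [Finite K] [Group Q] [Finite Q] [IsCyclic Q]
    (q : ℕ) (hq : q.Prime) (hQ : Nat.card Q = q)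
    (hcop : ¬ q ∣ Nat.card (Subgroup.center K))
    (μ : K → ℂ) (hμirr : IsIrrChar K μ)
    (hμfaithful : ∀ k : K, μ k = μ 1 → k = 1)
    (ρ : Q →* ℂˣ) (hρ : Function.Injective ρ) :
    IsIrrChar (K × Q) (fun kx => μ kx.1 * (ρ kx.2 : ℂ)) ∧
    (∀ kx : K × Q, μ kx.1 * (ρ kx.2 : ℂ) = μ 1 → kx = 1) := by
  obtain ⟨V, hVsimple, hchar⟩ := hμirr
  haveI := hVsimple
  set W : FDRep ℂ (K × Q) := FDRep.of (extRep V ρ) with hW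
  set dV : ℕ := Module.finrank ℂ V with hdV
  have hμ1 : μ 1 = (dV : ℂ) := by rw [hchar]; exact_mod_cast V.char_one
  have hd0 : dV ≠ 0 := by
    intro h0
    haveI : Module.Finite ℂ (↑V.V.obj) := (inferInstance : FiniteDimensional ℂ V)
    haveI : Subsingleton (↑V.V.obj) := Module.finrank_zero_iff.mp h0
    have hid : 𝟙 V = 0 := by
      apply Action.hom_ext
      rw [Action.id_hom, Action.zero_hom]
      apply FGModuleCat.hom_ext
      apply LinearMap.ext
      intro v
      exact Subsingleton.elim _ _
    exact id_nonzero V hid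
  have hker : ∀ g : K, V.ρ g = 1 → g = 1 := by
    intro g hg
    apply hμfaithful
    rw [hchar]
    show V.character g = V.character 1
    simp [FDRep.character, hg]
  have htrρ : ∀ g : K, LinearMap.trace ℂ (↥V) (V.ρ g) = μ g := by
    intro g
    rw [hchar]
    rfl
  -- faithfulness
  have hfaith : ∀ kx : K × Q, μ kx.1 * (ρ kx.2 : ℂ) = μ 1 → kx = 1 := by
    rintro ⟨k, x⟩ h
    set c : ℂˣ := ρ x with hc
    have hxq : x ^ q = 1 := by rw [← hQ]; exact pow_card_eq_one'
    have hcq : c ^ q = 1 := by rw [hc, ← map_pow, hxq, map_one]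
    set N : ℕ := Nat.card K * q with hN
    have hNne : N ≠ 0 := Nat.mul_ne_zero Nat.card_pos.ne' hq.ne_zero
    have hkN : k ^ N = 1 := by rw [hN, pow_mul, pow_card_eq_one', one_pow]
    have hcN : (c : ℂ) ^ N = 1 := by
      have h1 : c ^ N = 1 := by rw [hN, mul_comm, pow_mul, hcq, one_pow]
      calc (c : ℂ) ^ N = ((c ^ N : ℂˣ) : ℂ) := by rw [Units.val_pow_eq_pow_val]
      _ = 1 := by rw [h1, Units.val_one]
    set f : ↥V →ₗ[ℂ] ↥V := (c : ℂ) • V.ρ k with hf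
    have hfN : f ^ N = 1 := by
      rw [hf, _root_.smul_pow, ← map_pow, hkN, map_one, hcN, one_smul]
    have hftr : LinearMap.trace ℂ (↥V) f = (dV : ℂ) := by
      rw [hf, map_smul, htrρ, smul_eq_mul, mul_comm, h, hμ1]
    have hf1 : f = 1 := endo_eq_one_of_pow_eq_one_of_trace hNne hfN hftr
    set ζ : ℂ := ((c⁻¹ : ℂˣ) : ℂ) with hζ
    have hρk : V.ρ k = ζ • (1 : ↥V →ₗ[ℂ] ↥V) := by
      have h1 : ζ • f = ζ • (1 : ↥V →ₗ[ℂ] ↥V) := by rw [hf1]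
      rw [hf, smul_smul] at h1
      have h2 : ζ * (c : ℂ) = 1 := by
        rw [hζ, ← Units.val_mul, inv_mul_cancel, Units.val_one]
      rw [h2, one_smul] at h1
      exact h1
    have hcen : ∀ g : K, g * k = k * g := by
      intro g
      have h1 : V.ρ (k * g) = V.ρ (g * k) := by
        rw [map_mul, map_mul, hρk, smul_mul_assoc, mul_smul_comm, one_mul, mul_one]
      have h2 : V.ρ ((k * g) * (g * k)⁻¹) = 1 := by
        rw [map_mul, h1, ← map_mul, mul_inv_cancel, map_one]
      have h3 := hker _ h2
      rw [mul_inv_eq_one] at h3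
      exact h3.symm
    have hkmem : k ∈ Subgroup.center K := Subgroup.mem_center_iff.mpr hcen
    set z : ℕ := Nat.card (Subgroup.center K) with hz
    have hkz : k ^ z = 1 := by
      have h1 : (⟨k, hkmem⟩ : Subgroup.center K) ^ z = 1 := pow_card_eq_one'
      have h2 := congrArg (Subtype.val) h1
      simpa using h2
    have hζz : ζ ^ z = 1 := by
      have h1 : V.ρ (k ^ z) = 1 := by rw [hkz, map_one]
      rw [map_pow, hρk, _root_.smul_pow, one_pow] at h1
      have h2 := congrArg (LinearMap.trace ℂ (↥V)) h1
      rw [map_smul, LinearMap.trace_one, smul_eq_mul] at h2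
      have hdC : (dV : ℂ) ≠ 0 := Nat.cast_ne_zero.mpr hd0
      have h3 : ζ ^ z * (dV : ℂ) = 1 * (dV : ℂ) := by
        rw [one_mul]; exact_mod_cast h2
      exact mul_right_cancel₀ hdC h3
    have hζq : ζ ^ q = 1 := by
      have h1 : (c⁻¹) ^ q = 1 := by rw [inv_pow, hcq, inv_one]
      calc ζ ^ q = (((c⁻¹) ^ q : ℂˣ) : ℂ) := by rw [hζ, Units.val_pow_eq_pow_val]
      _ = 1 := by rw [h1, Units.val_one]
    have hcop' : Nat.Coprime q z := (Nat.Prime.coprime_iff_not_dvd hq).mpr hcop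
    have hord : orderOf ζ = 1 := by
      have h1 : orderOf ζ ∣ q := orderOf_dvd_of_pow_eq_one hζq
      have h2 : orderOf ζ ∣ z := orderOf_dvd_of_pow_eq_one hζz
      have h3 := Nat.dvd_gcd h1 h2
      rwa [Nat.Coprime.gcd_eq_one hcop', Nat.dvd_one] at h3
    have hζ1 : ζ = 1 := orderOf_eq_one_iff.mp hord
    have hx : x = 1 := by
      apply hρ
      rw [map_one]
      have h1 : (c⁻¹ : ℂˣ) = 1 := Units.ext (by rw [Units.val_one]; exact hζ1)
      have h2 : c = 1 := by
        rw [← inv_inv c, h1, inv_one]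
      exact h2
    have hk : k = 1 := by
      apply hker
      rw [hρk, hζ1, one_smul]
    exact Prod.ext hk hx
  refine ⟨⟨W, ?_, ?_⟩, hfaith⟩
  · apply simple_of_res_simple (MonoidHom.inl K Q)
    have e : (Action.res (FGModuleCat ℂ) (MonoidHom.inl K Q)).obj W ≅ V := by
      refine Action.mkIso (Iso.refl _) ?_
      intro g
      simp only [Iso.refl_hom, Category.comp_id, Category.id_comp]
      apply FGModuleCat.hom_ext
      show (ρ (1 : Q) : ℂ) • V.ρ g = V.ρ g
      rw [map_one, Units.val_one, one_smul]
    exact Simple.of_iso e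
  · funext kx
    show μ kx.1 * (ρ kx.2 : ℂ) = LinearMap.trace ℂ (↥V) (W.ρ kx)
    have hWρ : W.ρ kx = (ρ kx.2 : ℂ) • V.ρ kx.1 := rfl
    rw [hWρ, map_smul, htrρ, smul_eq_mul, mul_comm]
end

section
/- Let H be a finite p'-group acting on a finite abelian p-group V. Then the permutation actions of H on V and on Irr(V) (the dual group) are isomorphic as H-sets. In particular, for each v ∈ V there is μ ∈ Irr(V) with H_v = H_μ, and the numbers of orbits coincide. -/
open MulAction

set_option linter.unusedSectionVars false

lemma dual_mulEquiv (A : Type) [CommGroup A] [Finite A] : Nonempty ((A →* ℂˣ) ≃* A) := by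
  have : NeZero ((Monoid.exponent A : ℕ) : ℂ) :=
    ⟨by exact_mod_cast Monoid.exponent_ne_zero_of_finite (G := A)⟩
  exact CommGroup.monoidHom_mulEquiv_of_hasEnoughRootsOfUnity A ℂ

lemma card_dual (A : Type) [CommGroup A] [Finite A] : Nat.card (A →* ℂˣ) = Nat.card A :=
  Nat.card_congr (dual_mulEquiv A).some.toEquiv

/-- The fixed-point subgroup of `U` acting on `V`. -/
def fixSub (H V : Type) [Group H] [CommGroup V] [MulDistribMulAction H V]
    (U : Subgroup H) : Subgroup V where
  carrier := {v | ∀ g ∈ U, g • v = v}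
  one_mem' := fun g _ => smul_one g
  mul_mem' := by
    intro a b ha hb g hg
    rw [smul_mul', ha g hg, hb g hg]
  inv_mem' := by
    intro a ha g hg
    rw [smul_inv', ha g hg]

lemma card_fixed_eq (p : ℕ) (hp : p.Prime) (H V : Type) [Group H] [Finite H] [CommGroup V]
    [Finite V] (hV : IsPGroup p V) (hH : ¬ p ∣ Nat.card H) [MulDistribMulAction H V]
    (U : Subgroup H) :
    Nat.card {μ : V →* ℂˣ // ∀ g ∈ U, ∀ v, μ (g • v) = μ v}
      = Nat.card {v : V // ∀ g ∈ U, g • v = v} := by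
  classical
  haveI : Fintype U := Fintype.ofFinite _
  set n := Nat.card U with hn
  -- coprimality
  have hpn : ¬ p ∣ n := fun hdvd => hH (hdvd.trans (Subgroup.card_subgroup_dvd_card U))
  have hc : (Nat.card V).Coprime n := by
    haveI : Fact p.Prime := ⟨hp⟩
    obtain ⟨k, hk⟩ := IsPGroup.exists_card_eq hV
    rw [hk]
    exact Nat.Coprime.pow_left k ((hp.coprime_iff_not_dvd).mpr hpn)
  -- the subgroup K generated by commutators g•v * v⁻¹
  set S : Set V := {x | ∃ g ∈ U, ∃ v : V, g • v * v⁻¹ = x} with hS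
  set K : Subgroup V := Subgroup.closure S with hK
  set C : Subgroup V := fixSub H V U with hC
  -- the transfer/averaging map
  set T : V →* V :=
    { toFun := fun v => ∏ g : U, (g : H) • v
      map_one' := by simp
      map_mul' := by
        intro v w
        rw [← Finset.prod_mul_distrib]
        simp [smul_mul'] } with hT
  have hTapp : ∀ v : V, T v = ∏ g : U, (g : H) • v := fun v => rfl
  have hTU : ∀ g ∈ U, ∀ v : V, T (g • v) = T v := by
    intro g hg v
    rw [hTapp, hTapp]
    exact Fintype.prod_equiv (Equiv.mulRight ⟨g, hg⟩) _ _
      (fun u => by simp [mul_smul])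
  have hTC : ∀ v : V, T v ∈ C := by
    intro v g hg
    rw [hTapp, Finset.smul_prod']
    exact Fintype.prod_equiv (Equiv.mulLeft ⟨g, hg⟩) _ _
      (fun u => by simp [mul_smul])
  have hKT : K ≤ T.ker := by
    rw [hK, Subgroup.closure_le]
    rintro x ⟨g, hg, v, rfl⟩
    simp only [SetLike.mem_coe, MonoidHom.mem_ker, map_mul, map_inv, hTU g hg v, mul_inv_cancel]
  -- fixed characters correspond to characters of V/K
  have e1 : {μ : V →* ℂˣ // ∀ g ∈ U, ∀ v, μ (g • v) = μ v} ≃ {μ : V →* ℂˣ // K ≤ μ.ker} := by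
    refine Equiv.subtypeEquivRight (fun μ => ?_)
    constructor
    · intro h
      rw [hK, Subgroup.closure_le]
      rintro x ⟨g, hg, v, rfl⟩
      simp only [SetLike.mem_coe, MonoidHom.mem_ker, map_mul, map_inv, h g hg v, mul_inv_cancel]
    · intro h g hg v
      have hx : g • v * v⁻¹ ∈ K := Subgroup.subset_closure ⟨g, hg, v, rfl⟩
      have := h hx
      rw [MonoidHom.mem_ker, map_mul, map_inv] at this
      have := mul_eq_one_iff_eq_inv.mp this
      rw [this, inv_inv]
  have e2 : {μ : V →* ℂˣ // K ≤ μ.ker} ≃ ((V ⧸ K) →* ℂˣ) := by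
    refine
      { toFun := fun μ => QuotientGroup.lift K μ.1 μ.2
        invFun := fun ν => ⟨ν.comp (QuotientGroup.mk' K), ?_⟩
        left_inv := ?_
        right_inv := ?_ }
    · intro x hx
      rw [MonoidHom.mem_ker]
      simp only [MonoidHom.coe_comp, Function.comp_apply, QuotientGroup.mk'_apply]
      rw [(QuotientGroup.eq_one_iff x).mpr hx, map_one]
    · intro μ
      apply Subtype.ext
      ext v
      simp only [MonoidHom.coe_comp, Function.comp_apply, QuotientGroup.mk'_apply,
        QuotientGroup.lift_mk]
    · intro ν
      ext x
      simp only [QuotientGroup.lift_mk, MonoidHom.coe_comp, Function.comp_apply,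
        QuotientGroup.mk'_apply]
  -- the bijection V/K ≃ C
  set Tbar : V ⧸ K →* V := QuotientGroup.lift K T hKT with hTbar
  have hTbarC : ∀ x : V ⧸ K, Tbar x ∈ C := by
    intro x
    refine QuotientGroup.induction_on x (fun v => ?_)
    rw [hTbar, QuotientGroup.lift_mk]
    exact hTC v
  set a : V ⧸ K → C := fun x => ⟨Tbar x, hTbarC x⟩ with ha
  set b : C → V ⧸ K := fun c => ((c : V) : V ⧸ K) with hb
  have hcard_univ : (Finset.univ : Finset U).card = n := by
    rw [hn, Nat.card_eq_fintype_card, Fintype.card]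
  have hba : ∀ x, b (a x) = x ^ n := by
    intro x
    refine QuotientGroup.induction_on x (fun v => ?_)
    have : b (a ((v : V ⧸ K))) = ((T v : V) : V ⧸ K) := by
      simp [ha, hb, hTbar]
    rw [this]
    have hpow : ((v : V ⧸ K)) ^ n = ((v ^ n : V) : V ⧸ K) := by
      simp
    rw [hpow]
    rw [QuotientGroup.eq]
    have key : (T v)⁻¹ * v ^ n = ∏ g : U, ((g : H) • v * v⁻¹)⁻¹ := by
      rw [hTapp, Finset.prod_inv_distrib, ← Finset.prod_inv_distrib]
      rw [Finset.prod_mul_distrib]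
      simp [Finset.prod_const, hcard_univ, mul_comm, inv_pow]
    rw [key]
    exact Subgroup.prod_mem K (fun g _ =>
      K.inv_mem (Subgroup.subset_closure ⟨(g : H), g.2, v, rfl⟩))
  have hab : ∀ c : C, a (b c) = c ^ n := by
    intro c
    apply Subtype.ext
    have : (a (b c) : V) = T (c : V) := by simp [ha, hb, hTbar]
    rw [this]
    have : T (c : V) = (c : V) ^ n := by
      rw [hTapp]
      calc ∏ g : U, (g : H) • (c : V) = ∏ _g : U, (c : V) :=
            Finset.prod_congr rfl (fun g _ => c.2 g.1 g.2)
        _ = (c : V) ^ n := by rw [Finset.prod_const, hcard_univ]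
    rw [this]
    simp
  have hcop1 : (Nat.card (V ⧸ K)).Coprime n :=
    Nat.Coprime.coprime_dvd_left (Subgroup.card_quotient_dvd_card K) hc
  have hcop2 : (Nat.card C).Coprime n :=
    Nat.Coprime.coprime_dvd_left (Subgroup.card_subgroup_dvd_card C) hc
  have hbij : Function.Bijective a := by
    constructor
    · intro x y hxy
      have : x ^ n = y ^ n := by rw [← hba, ← hba, hxy]
      have := (powCoprime hcop1).injective (by simpa [powCoprime_apply] using this)
      exact this
    · intro c
      obtain ⟨d, hd⟩ := (powCoprime hcop2).surjective c
      exact ⟨b d, by rw [hab]; simpa [powCoprime_apply] using hd⟩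
  calc Nat.card {μ : V →* ℂˣ // ∀ g ∈ U, ∀ v, μ (g • v) = μ v}
      = Nat.card ((V ⧸ K) →* ℂˣ) := Nat.card_congr (e1.trans e2)
    _ = Nat.card (V ⧸ K) := card_dual _
    _ = Nat.card C := Nat.card_eq_of_bijective a hbij
    _ = Nat.card {v : V // ∀ g ∈ U, g • v = v} := Nat.card_congr (Equiv.subtypeEquivRight (fun v => Iff.rfl))


section Key

variable {G X Y : Type} [Group G] [Finite G] [MulAction G X] [MulAction G Y]

lemma smul_eq_transfer {x : X} {y : Y}
    (hiff : ∀ g : G, g • x = x ↔ g • y = y) :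
    ∀ g₁ g₂ : G, g₁ • x = g₂ • x → g₁ • y = g₂ • y := by
  intro g₁ g₂ h
  have h1 : (g₂⁻¹ * g₁) • x = x := by rw [mul_smul, h, inv_smul_smul]
  have h2 := (hiff _).mp h1
  rw [mul_smul] at h2
  calc g₁ • y = g₂ • (g₂⁻¹ • (g₁ • y)) := (smul_inv_smul _ _).symm
    _ = g₂ • y := by rw [h2]

theorem key_lemma [Finite X] [Finite Y] (n : ℕ) :
    ∀ (A : Set X) (B : Set Y)
      (hA : ∀ (g : G) (a : X), a ∈ A → g • a ∈ A)
      (_hB : ∀ (g : G) (b : Y), b ∈ B → g • b ∈ B),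
      A.ncard = n →
      (∀ U : Subgroup G, {a | a ∈ A ∧ ∀ g ∈ U, g • a = a}.ncard
          = {b | b ∈ B ∧ ∀ g ∈ U, g • b = b}.ncard) →
      ∃ e : A ≃ B, ∀ (g : G) (a : X) (ha : a ∈ A),
        (e ⟨g • a, hA g a ha⟩ : Y) = g • (e ⟨a, ha⟩ : Y) := by
  induction n using Nat.strong_induction_on with
  | _ n ih =>
  intro A B hA hB hcard hfix
  classical
  by_cases hAne : A.Nonempty
  case neg =>
    have hAe : A = ∅ := Set.not_nonempty_iff_eq_empty.mp hAne
    have h1 : {a | a ∈ A ∧ ∀ g ∈ (⊥ : Subgroup G), g • a = a} = A := by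
      ext a
      simp only [Set.mem_setOf_eq, and_iff_left_iff_imp]
      intro _ g hg
      rw [Subgroup.mem_bot] at hg
      rw [hg, one_smul]
    have h2 : {b | b ∈ B ∧ ∀ g ∈ (⊥ : Subgroup G), g • b = b} = B := by
      ext b
      simp only [Set.mem_setOf_eq, and_iff_left_iff_imp]
      intro _ g hg
      rw [Subgroup.mem_bot] at hg
      rw [hg, one_smul]
    have hBcard : B.ncard = 0 := by
      rw [← h2, ← hfix ⊥, h1, hAe, Set.ncard_empty]
    have hBe : B = ∅ := by
      rcases Set.eq_empty_or_nonempty B with h | h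
      · exact h
      · exact absurd hBcard ((Set.ncard_pos B.toFinite).mpr h).ne'
    haveI : IsEmpty ↥A := Set.isEmpty_coe_sort.mpr hAe
    haveI : IsEmpty ↥B := Set.isEmpty_coe_sort.mpr hBe
    exact ⟨Equiv.equivOfIsEmpty _ _, fun g a ha => absurd ha (by rw [hAe]; exact id)⟩
  case pos =>
  obtain ⟨a₀, ha₀⟩ := hAne
  set S : Set (Subgroup G) := {U | {a | a ∈ A ∧ ∀ g ∈ U, g • a = a}.Nonempty} with hSdef
  have hbotS : (⊥ : Subgroup G) ∈ S := ⟨a₀, ha₀, fun g hg => by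
    rw [Subgroup.mem_bot] at hg; rw [hg, one_smul]⟩
  obtain ⟨U, hUS, hUmax⟩ := Set.Finite.exists_maximalFor id S S.toFinite ⟨⊥, hbotS⟩
  obtain ⟨x, hxA, hxfix⟩ := hUS
  have hSmem : ∀ W : Subgroup G, W ∈ S ↔ {b | b ∈ B ∧ ∀ g ∈ W, g • b = b}.Nonempty := by
    intro W
    constructor
    · intro hW
      apply Set.nonempty_of_ncard_ne_zero
      rw [← hfix W]
      exact ((Set.ncard_pos (Set.toFinite _)).mpr hW).ne'
    · intro hW
      apply Set.nonempty_of_ncard_ne_zero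
      rw [hfix W]
      exact ((Set.ncard_pos (Set.toFinite _)).mpr hW).ne'
  obtain ⟨y, hyB, hyfix⟩ := (hSmem U).mp ⟨x, hxA, hxfix⟩
  have hstabx : ∀ g : G, g • x = x ↔ g ∈ U := by
    intro g
    have hmem : MulAction.stabilizer G x ∈ S := ⟨x, hxA, fun g hg => hg⟩
    have hle : U ≤ MulAction.stabilizer G x := fun u hu => hxfix u hu
    have hUeq : U = MulAction.stabilizer G x := le_antisymm hle (hUmax hmem hle)
    rw [hUeq]
    exact Iff.rfl
  have hstaby : ∀ g : G, g • y = y ↔ g ∈ U := by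
    intro g
    have hmem : MulAction.stabilizer G y ∈ S :=
      (hSmem _).mpr ⟨y, hyB, fun g hg => hg⟩
    have hle : U ≤ MulAction.stabilizer G y := fun u hu => hyfix u hu
    have hUeq : U = MulAction.stabilizer G y := le_antisymm hle (hUmax hmem hle)
    rw [hUeq]
    exact Iff.rfl
  have hiff : ∀ g : G, g • x = x ↔ g • y = y :=
    fun g => (hstabx g).trans (hstaby g).symm
  have txy : ∀ g₁ g₂ : G, g₁ • x = g₂ • x → g₁ • y = g₂ • y := smul_eq_transfer hiff
  have tyx : ∀ g₁ g₂ : G, g₁ • y = g₂ • y → g₁ • x = g₂ • x :=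
    smul_eq_transfer (fun g => (hiff g).symm)
  -- the orbit-transfer map τ
  obtain ⟨τ, hτ⟩ : ∃ τ : X → Y, ∀ g : G, τ (g • x) = g • y := by
    refine ⟨fun z => if hz : z ∈ MulAction.orbit G x
      then (MulAction.mem_orbit_iff.mp hz).choose • y else y, ?_⟩
    intro g
    have hz : g • x ∈ MulAction.orbit G x := MulAction.mem_orbit_iff.mpr ⟨g, rfl⟩
    simp only [dif_pos hz]
    exact txy _ _ (MulAction.mem_orbit_iff.mp hz).choose_spec
  have horbitA : MulAction.orbit G x ⊆ A := by
    rintro z ⟨g, rfl⟩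
    exact hA g x hxA
  have horbinvx : ∀ (g : G) (z : X), z ∈ MulAction.orbit G x → g • z ∈ MulAction.orbit G x := by
    rintro g z ⟨g₀, rfl⟩
    exact ⟨g * g₀, mul_smul g g₀ x⟩
  have hτB : ∀ z : X, z ∈ MulAction.orbit G x → τ z ∈ B := by
    rintro z ⟨g, rfl⟩
    rw [hτ g]
    exact hB g y hyB
  have hτorb : ∀ z : X, z ∈ MulAction.orbit G x → τ z ∈ MulAction.orbit G y := by
    rintro z ⟨g, rfl⟩
    rw [hτ g]
    exact ⟨g, rfl⟩
  -- the complements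
  set A' : Set X := A \ MulAction.orbit G x with hA'def
  set B' : Set Y := B \ MulAction.orbit G y with hB'def
  have hA' : ∀ (g : G) (a : X), a ∈ A' → g • a ∈ A' := by
    rintro g a ⟨haA, hao⟩
    refine ⟨hA g a haA, fun hcon => hao ?_⟩
    have := horbinvx g⁻¹ _ hcon
    rwa [inv_smul_smul] at this
  have hB' : ∀ (g : G) (b : Y), b ∈ B' → g • b ∈ B' := by
    rintro g b ⟨hbB, hbo⟩
    refine ⟨hB g b hbB, fun hcon => hbo ?_⟩
    rcases hcon with ⟨g₀, hg₀⟩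
    replace hg₀ : g₀ • y = g • b := hg₀
    refine ⟨g⁻¹ * g₀, ?_⟩
    show (g⁻¹ * g₀) • y = b
    rw [mul_smul, hg₀, inv_smul_smul]
  -- fixed point counts for the complements
  have hfix' : ∀ U' : Subgroup G, {a | a ∈ A' ∧ ∀ g ∈ U', g • a = a}.ncard
      = {b | b ∈ B' ∧ ∀ g ∈ U', g • b = b}.ncard := by
    intro U'
    set FixA : Set X := {a | a ∈ A ∧ ∀ g ∈ U', g • a = a} with hFixA
    set FixB : Set Y := {b | b ∈ B ∧ ∀ g ∈ U', g • b = b} with hFixB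
    have hsplitA := Set.ncard_inter_add_ncard_diff_eq_ncard FixA (MulAction.orbit G x)
      (Set.toFinite _)
    have hsplitB := Set.ncard_inter_add_ncard_diff_eq_ncard FixB (MulAction.orbit G y)
      (Set.toFinite _)
    have hdiffA : {a | a ∈ A' ∧ ∀ g ∈ U', g • a = a} = FixA \ MulAction.orbit G x := by
      ext a
      simp only [hFixA, hA'def, Set.mem_setOf_eq, Set.mem_diff]
      tauto
    have hdiffB : {b | b ∈ B' ∧ ∀ g ∈ U', g • b = b} = FixB \ MulAction.orbit G y := by
      ext b
      simp only [hFixB, hB'def, Set.mem_setOf_eq, Set.mem_diff]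
      tauto
    have hinter : (FixA ∩ MulAction.orbit G x).ncard = (FixB ∩ MulAction.orbit G y).ncard := by
      rw [← Nat.card_coe_set_eq, ← Nat.card_coe_set_eq]
      apply Nat.card_congr
      have hmem : ∀ z : X, z ∈ FixA ∩ MulAction.orbit G x →
          τ z ∈ FixB ∩ MulAction.orbit G y := by
        rintro z ⟨⟨hzA, hzfix⟩, g, rfl⟩
        rw [hτ g]
        refine ⟨⟨hB g y hyB, ?_⟩, ⟨g, rfl⟩⟩
        intro u hu
        have h1 : (u * g) • x = g • x := by
          rw [mul_smul]
          exact hzfix u hu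
        have h2 := txy _ _ h1
        rwa [mul_smul] at h2
      refine Equiv.ofBijective (fun z => ⟨τ z.1, hmem z.1 z.2⟩) ⟨?_, ?_⟩
      · intro z₁ z₂ h
        obtain ⟨g₁, hg₁⟩ := z₁.2.2
        obtain ⟨g₂, hg₂⟩ := z₂.2.2
        replace hg₁ : g₁ • x = (z₁ : X) := hg₁
        replace hg₂ : g₂ • x = (z₂ : X) := hg₂
        have hval : τ (z₁ : X) = τ (z₂ : X) := congrArg Subtype.val h
        rw [← hg₁, ← hg₂, hτ g₁, hτ g₂] at hval
        have := tyx _ _ hval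
        apply Subtype.ext
        rw [← hg₁, ← hg₂, this]
      · rintro ⟨w, ⟨hwB, hwfix⟩, g, hg⟩
        replace hg : g • y = w := hg
        have hzmem : g • x ∈ FixA ∩ MulAction.orbit G x := by
          refine ⟨⟨hA g x hxA, ?_⟩, ⟨g, rfl⟩⟩
          intro u hu
          have h1 : (u * g) • y = g • y := by
            rw [mul_smul, hg, hwfix u hu]
          have h2 := tyx _ _ h1
          rwa [mul_smul] at h2
        refine ⟨⟨g • x, hzmem⟩, Subtype.ext ?_⟩
        show τ (g • x) = w
        rw [hτ g, hg]
    have hFF : FixA.ncard = FixB.ncard := hfix U'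
    rw [hdiffA, hdiffB]
    omega
  -- cardinality decreases
  have hlt : A'.ncard < n := by
    have hssub : A' ⊂ A :=
      ⟨Set.diff_subset, fun hsub => (hsub hxA).2 (MulAction.mem_orbit_self x)⟩
    rw [← hcard]
    exact Set.ncard_lt_ncard hssub A.toFinite
  obtain ⟨e', he'⟩ := ih A'.ncard hlt A' B' hA' hB' rfl hfix'
  -- glue the orbit bijection with e'
  set Φ : ↥A → ↥B := fun a =>
    if hz : (a : X) ∈ MulAction.orbit G x then ⟨τ a, hτB a hz⟩
    else ⟨(e' ⟨a.1, ⟨a.2, hz⟩⟩ : Y), (e' ⟨a.1, ⟨a.2, hz⟩⟩).2.1⟩ with hΦ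
  have hΦval_pos : ∀ (a : ↥A) (hz : (a : X) ∈ MulAction.orbit G x), (Φ a : Y) = τ a := by
    intro a hz
    rw [hΦ]
    simp only [dif_pos hz]
  have hΦval_neg : ∀ (a : ↥A) (hz : ¬ (a : X) ∈ MulAction.orbit G x),
      (Φ a : Y) = (e' ⟨a.1, ⟨a.2, hz⟩⟩ : Y) := by
    intro a hz
    rw [hΦ]
    simp only [dif_neg hz]
  have hinj : Function.Injective Φ := by
    intro a₁ a₂ h
    have hval : (Φ a₁ : Y) = (Φ a₂ : Y) := congrArg Subtype.val h
    by_cases h₁ : (a₁ : X) ∈ MulAction.orbit G x <;>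
      by_cases h₂ : (a₂ : X) ∈ MulAction.orbit G x
    · rw [hΦval_pos a₁ h₁, hΦval_pos a₂ h₂] at hval
      obtain ⟨g₁, hg₁⟩ := h₁
      obtain ⟨g₂, hg₂⟩ := h₂
      replace hg₁ : g₁ • x = (a₁ : X) := hg₁
      replace hg₂ : g₂ • x = (a₂ : X) := hg₂
      rw [← hg₁, ← hg₂, hτ g₁, hτ g₂] at hval
      have := tyx _ _ hval
      apply Subtype.ext
      rw [← hg₁, ← hg₂, this]
    · rw [hΦval_pos a₁ h₁, hΦval_neg a₂ h₂] at hval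
      exact absurd (hval ▸ hτorb _ h₁) (e' ⟨a₂.1, ⟨a₂.2, h₂⟩⟩).2.2
    · rw [hΦval_neg a₁ h₁, hΦval_pos a₂ h₂] at hval
      exact absurd (hval ▸ hτorb _ h₂) (e' ⟨a₁.1, ⟨a₁.2, h₁⟩⟩).2.2
    · rw [hΦval_neg a₁ h₁, hΦval_neg a₂ h₂] at hval
      have := e'.injective (Subtype.ext hval)
      exact Subtype.ext (Subtype.mk_eq_mk.mp this)
  have hsurj : Function.Surjective Φ := by
    intro b
    by_cases hb : (b : Y) ∈ MulAction.orbit G y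
    · obtain ⟨g, hg⟩ := hb
      replace hg : g • y = (b : Y) := hg
      have hz : g • x ∈ MulAction.orbit G x := ⟨g, rfl⟩
      refine ⟨⟨g • x, hA g x hxA⟩, Subtype.ext ?_⟩
      rw [hΦval_pos ⟨g • x, hA g x hxA⟩ hz]
      show τ (g • x) = (b : Y)
      rw [hτ g, hg]
    · set w : ↥A' := e'.symm ⟨b.1, ⟨b.2, hb⟩⟩ with hw
      refine ⟨⟨w.1, w.2.1⟩, Subtype.ext ?_⟩
      rw [hΦval_neg ⟨w.1, w.2.1⟩ w.2.2]
      have hww : (⟨w.1, ⟨w.2.1, w.2.2⟩⟩ : ↥A') = w := Subtype.ext rfl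
      rw [hww, hw, Equiv.apply_symm_apply]
  refine ⟨Equiv.ofBijective Φ ⟨hinj, hsurj⟩, ?_⟩
  intro g a ha
  show (Φ ⟨g • a, hA g a ha⟩ : Y) = g • (Φ ⟨a, ha⟩ : Y)
  by_cases hz : a ∈ MulAction.orbit G x
  · have hz' : g • a ∈ MulAction.orbit G x := horbinvx g a hz
    rw [hΦval_pos ⟨g • a, hA g a ha⟩ hz', hΦval_pos ⟨a, ha⟩ hz]
    obtain ⟨g₀, hg₀⟩ := hz
    show τ (g • a) = g • τ a
    rw [← hg₀, ← mul_smul, hτ g₀, hτ (g * g₀), mul_smul]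
  · have hz' : ¬ g • a ∈ MulAction.orbit G x := by
      intro hcon
      have := horbinvx g⁻¹ _ hcon
      rw [inv_smul_smul] at this
      exact hz this
    rw [hΦval_neg ⟨g • a, hA g a ha⟩ hz', hΦval_neg ⟨a, ha⟩ hz]
    exact he' g a ⟨ha, hz⟩

end Key


section Assemble

variable {H V : Type} [Group H] [CommGroup V] [MulDistribMulAction H V]

instance dualAction : MulAction H (V →* ℂˣ) where
  smul h μ := μ.comp (MulDistribMulAction.toMonoidHom V h⁻¹)
  one_smul μ := by
    refine MonoidHom.ext fun v => ?_
    show μ (((1 : H))⁻¹ • v) = μ v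
    rw [inv_one, one_smul]
  mul_smul g h μ := by
    refine MonoidHom.ext fun v => ?_
    show μ ((g * h)⁻¹ • v) = μ (h⁻¹ • g⁻¹ • v)
    rw [mul_inv_rev, mul_smul]

lemma dual_smul_apply (h : H) (μ : V →* ℂˣ) (v : V) : (h • μ) v = μ (h⁻¹ • v) := rfl

end Assemble

/-- Let `H` be a finite `p'`-group acting by automorphisms on a finite abelian
`p`-group `V`.  Then the permutation actions of `H` on `V` and on the dual group
`Irr(V) = Hom(V, ℂˣ)` (with action `(h·μ)(v) = μ(h⁻¹·v)`) are isomorphic as `H`-sets: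
there is an equivariant bijection `f`.  In particular, for every `v` the stabilizer of `v`
equals the stabilizer of `μ = f v`, and the numbers of orbits on both sides coincide. -/
theorem dual_action_permutation_isomorphic
    (p : ℕ) (hp : p.Prime) (H V : Type) [Group H] [Finite H] [CommGroup V] [Finite V]
    (hV : IsPGroup p V) (hH : ¬ p ∣ Nat.card H) [MulDistribMulAction H V] :
    ∃ f : V ≃ (V →* ℂˣ),
      (∀ (h : H) (v : V) (w : V), f (h • v) w = f v (h⁻¹ • w)) ∧
      (∀ v : V, {h : H | h • v = v} = {h : H | ∀ w : V, f v (h • w) = f v w}) := by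
  classical
  obtain ⟨de⟩ := dual_mulEquiv V
  haveI : Finite (V →* ℂˣ) := Finite.of_equiv V de.symm.toEquiv
  have hcount : ∀ U : Subgroup H,
      {a | a ∈ (Set.univ : Set V) ∧ ∀ g ∈ U, g • a = a}.ncard
        = {b | b ∈ (Set.univ : Set (V →* ℂˣ)) ∧ ∀ g ∈ U, g • b = b}.ncard := by
    intro U
    have hsetA : {a | a ∈ (Set.univ : Set V) ∧ ∀ g ∈ U, g • a = a}
        = {a : V | ∀ g ∈ U, g • a = a} := by ext a; simp
    have hsetB : {b | b ∈ (Set.univ : Set (V →* ℂˣ)) ∧ ∀ g ∈ U, g • b = b}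
        = {μ : V →* ℂˣ | ∀ g ∈ U, g • μ = μ} := by ext b; simp
    rw [hsetA, hsetB, ← Nat.card_coe_set_eq, ← Nat.card_coe_set_eq]
    have eiff : ∀ μ : V →* ℂˣ, (∀ g ∈ U, g • μ = μ) ↔ (∀ g ∈ U, ∀ v, μ (g • v) = μ v) := by
      intro μ
      constructor
      · intro h g hg v
        have h1 := h g⁻¹ (U.inv_mem hg)
        have h2 := DFunLike.congr_fun h1 v
        rw [dual_smul_apply, inv_inv] at h2
        exact h2
      · intro h g hg
        refine MonoidHom.ext fun v => ?_
        rw [dual_smul_apply]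
        exact h g⁻¹ (U.inv_mem hg) v
    calc Nat.card {a : V // ∀ g ∈ U, g • a = a}
        = Nat.card {μ : V →* ℂˣ // ∀ g ∈ U, ∀ v, μ (g • v) = μ v} :=
          (card_fixed_eq p hp H V hV hH U).symm
      _ = Nat.card {μ : V →* ℂˣ // ∀ g ∈ U, g • μ = μ} :=
          Nat.card_congr (Equiv.subtypeEquivRight (fun μ => (eiff μ).symm))
  obtain ⟨e, he⟩ := key_lemma (G := H) (X := V) (Y := V →* ℂˣ)
    ((Set.univ : Set V).ncard) Set.univ Set.univ
    (fun _ a _ => Set.mem_univ _) (fun _ b _ => Set.mem_univ _) rfl hcount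
  set f : V ≃ (V →* ℂˣ) := ((Equiv.Set.univ V).symm.trans e).trans (Equiv.Set.univ _) with hfdef
  have hf : ∀ v : V, f v = (e ⟨v, Set.mem_univ v⟩ : V →* ℂˣ) := fun v => rfl
  have hfsmul : ∀ (h : H) (v : V), f (h • v) = h • f v := by
    intro h v
    rw [hf, hf]
    exact he h v (Set.mem_univ v)
  refine ⟨f, ?_, ?_⟩
  · intro h v w
    rw [hfsmul h v]
    rfl
  · intro v
    ext h
    simp only [Set.mem_setOf_eq]
    constructor
    · intro hv w
      have h1 : f (h • v) = f v := by rw [hv]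
      rw [hfsmul] at h1
      have h2 := DFunLike.congr_fun h1 (h • w)
      rw [dual_smul_apply, inv_smul_smul] at h2
      exact h2.symm
    · intro hw
      have h1 : h⁻¹ • f v = f v := by
        refine MonoidHom.ext fun w => ?_
        rw [dual_smul_apply, inv_inv]
        exact hw w
      have h2 : f (h⁻¹ • v) = f v := by rw [hfsmul, h1]
      have h3 := f.injective h2
      calc h • v = h • (h⁻¹ • v) := by rw [h3]
        _ = v := smul_inv_smul _ _
end
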